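/- For a fixed initial state σ₀, the set of Aczel traces starting from σ₀ forms a complete lattice under the trace refinement ordering, with least element (σ₀, [π(⊥)]) and greatest element (σ₀, []). -/

import Mathlib

namespace Aczel

/-- Atomic steps: program step, environment step (with `none` denoting the
undefined/bottom state `⊥`), or termination marker `✓`. -/
inductive Step (S : Type) where
  | prog : Option S → Step S
  | env  : Option S → Step S
  | term : Step S

/-- Terminal steps `π(⊥)`, `ε(⊥)`, `✓` may occur only last in a trace. -/
def Step.isTerminal {S : Type} : Step S → Prop
  | .prog none => True
  | .env none  => True
  | .term      => True
  | _          => False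

/-- Possibly infinite sequences of steps, as partial functions on ℕ. -/
abbrev RawSeq (S : Type) := ℕ → Option (Step S)

def emptySeq (S : Type) : RawSeq S := fun _ => none

def seq1 {S : Type} (a : Step S) : RawSeq S := fun i => if i = 0 then some a else none

def seq2 {S : Type} (a b : Step S) : RawSeq S :=
  fun i => if i = 0 then some a else if i = 1 then some b else none

/-- `SeqPrefix t₁ t₂`: `t₁` is a prefix of `t₂`. -/
def SeqPrefix {S : Type} (t₁ t₂ : RawSeq S) : Prop :=
  ∀ i s, t₁ i = some s → t₂ i = some s

def HasLength {S : Type} (t : RawSeq S) (n : ℕ) : Prop :=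
  ∀ i, (t i).isSome ↔ i < n

def SeqFinite {S : Type} (t : RawSeq S) : Prop := ∃ n, HasLength t n

/-- `SnocEq t' t x`: `t` is finite and `t' = t ++ [x]`. -/
def SnocEq {S : Type} (t' t : RawSeq S) (x : Step S) : Prop :=
  ∃ n, HasLength t n ∧ (∀ i, i < n → t' i = t i) ∧ t' n = some x ∧ HasLength t' (n + 1)

/-- An Aczel trace: an initial state together with a (finite or infinite)
sequence of steps whose domain is downward closed and in which terminal
steps occur only as the last step. -/
structure Trace (S : Type) where
  init : S
  steps : RawSeq S
  closed : ∀ i, (steps (i + 1)).isSome → (steps i).isSome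
  wf : ∀ i st, steps i = some st → st.isTerminal → steps (i + 1) = none

/-- The trace refinement ordering. -/
def TrLE {S : Type} (tr₁ tr₂ : Trace S) : Prop :=
  tr₁.init = tr₂.init ∧
    (SeqPrefix tr₂.steps tr₁.steps ∨
      ∃ t₃ : RawSeq S, SnocEq tr₁.steps t₃ (Step.prog none) ∧ SeqPrefix t₃ tr₂.steps)

def emptyTrace {S : Type} (σ : S) : Trace S :=
  ⟨σ, emptySeq S, by intro i h; simp [emptySeq] at h, by intro i st h; simp [emptySeq] at h⟩

/-- The trace `(σ₀, [π(⊥)])`. -/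
def botTrace {S : Type} (σ₀ : S) : Trace S :=
  ⟨σ₀, seq1 (Step.prog none),
    by intro i h; simp [seq1] at h,
    by intro i st h _; simp [seq1]⟩

/-- Empty closure: add all empty traces. -/
def emptyClose {S : Type} (s : Set (Trace S)) : Set (Trace S) :=
  s ∪ {tr | tr.steps = emptySeq S}

/-- Prefix closure: empty closure plus all prefixes of traces of `s`. -/
def prefixClose {S : Type} (s : Set (Trace S)) : Set (Trace S) :=
  emptyClose s ∪ {tr | ∃ tr' ∈ s, tr'.init = tr.init ∧ SeqPrefix tr.steps tr'.steps}

/-- Aborting traces of `s`: those whose extension by `π(⊥)` is in `s`. -/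
def aborting {S : Type} (s : Set (Trace S)) : Set (Trace S) :=
  {tr | ∃ tr' ∈ s, tr'.init = tr.init ∧ SnocEq tr'.steps tr.steps (Step.prog none)}

/-- All extensions of traces of `s`. -/
def abortComplete {S : Type} (s : Set (Trace S)) : Set (Trace S) :=
  {tr | ∃ tr' ∈ s, tr'.init = tr.init ∧ SeqPrefix tr'.steps tr.steps}

def abortClose {S : Type} (s : Set (Trace S)) : Set (Trace S) :=
  s ∪ abortComplete (aborting s)

/-- Commands: prefix-closed and abort-closed sets of traces. -/
def IsCommand {S : Type} (s : Set (Trace S)) : Prop :=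
  s = prefixClose s ∧ s = abortClose s

/-- Refinement: `Ref c d` means `c ⊑ d`, i.e. `c ⊇ d`. -/
def Ref {S : Type} (c d : Set (Trace S)) : Prop := d ⊆ c

/-- Atomic program step command `π(r)`. -/
def Pi {S : Type} (r : Set (S × S)) : Set (Trace S) :=
  prefixClose {tr | ∃ p ∈ r, tr.init = p.1 ∧ tr.steps = seq2 (Step.prog (some p.2)) Step.term}

/-- Atomic environment step command `ε(r)`. -/
def Eps {S : Type} (r : Set (S × S)) : Set (Trace S) :=
  prefixClose {tr | ∃ p ∈ r, tr.init = p.1 ∧ tr.steps = seq2 (Step.env (some p.2)) Step.term}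

/-- Test command `τ(p)`. -/
def test {S : Type} (p : Set S) : Set (Trace S) :=
  emptyClose {tr | tr.init ∈ p ∧ tr.steps = seq1 Step.term}

def AbortC (S : Type) : Set (Trace S) := Set.univ

def MagicC (S : Type) : Set (Trace S) := emptyClose (∅ : Set (Trace S))

def NilC (S : Type) : Set (Trace S) := test Set.univ

/-- Environment abort command `⊥_ε`. -/
def EAbortC (S : Type) : Set (Trace S) :=
  emptyClose {tr | tr.steps = seq1 (Step.env none)}

/-- `ε⊥(r)`: environment step satisfying `r`, or environment abort. -/
def EpsBot {S : Type} (r : Set (S × S)) : Set (Trace S) := Eps r ∪ EAbortC S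

/-- Binary nondeterministic choice `⊓` (union, empty closed). -/
def choice {S : Type} (c₁ c₂ : Set (Trace S)) : Set (Trace S) := emptyClose (c₁ ∪ c₂)

/-- Nondeterministic choice over a set of commands `⨅ C`. -/
def NondetInf {S : Type} (C : Set (Set (Trace S))) : Set (Trace S) := emptyClose (⋃₀ C)

/-- Terminated traces of `c`: those ending in `✓`. -/
def terminated {S : Type} (c : Set (Trace S)) : Set (Trace S) :=
  {tr | tr ∈ c ∧ ∃ t : RawSeq S, SnocEq tr.steps t Step.term}

/-- Terminating traces of `c`, with the final `✓` removed. -/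
def terminating {S : Type} (c : Set (Trace S)) : Set (Trace S) :=
  {tr | ∃ tr' ∈ c, tr'.init = tr.init ∧ SnocEq tr'.steps tr.steps Step.term}

/-- `LastState tr σ`: `σ` is the last state of the (finite) trace `tr`. -/
def LastState {S : Type} (tr : Trace S) (σ : S) : Prop :=
  (HasLength tr.steps 0 ∧ σ = tr.init) ∨
    (∃ n s, HasLength tr.steps (n + 1) ∧ tr.steps n = some s ∧
      (s = Step.prog (some σ) ∨ s = Step.env (some σ)))

/-- Concatenation `s₁ ⌢ s₂` of matching traces. -/
def seqCat {S : Type} (s₁ s₂ : Set (Trace S)) : Set (Trace S) :=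
  {tr | ∃ tr₁ ∈ s₁, ∃ tr₂ ∈ s₂, ∃ n, HasLength tr₁.steps n ∧
    LastState tr₁ tr₂.init ∧ tr.init = tr₁.init ∧
    ∀ i, tr.steps i = if i < n then tr₁.steps i else tr₂.steps (i - n)}

/-- Sequential composition `c₁ ; c₂`: the unterminated traces of `c₁`
(abort closed) together with terminating traces of `c₁` (final `✓` removed)
concatenated with matching traces of `c₂`. -/
def seqComp {S : Type} (c₁ c₂ : Set (Trace S)) : Set (Trace S) :=
  abortClose (c₁ \ terminated c₁) ∪ seqCat (terminating c₁) c₂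

/-- Precondition command `pre(p)`. -/
def preC {S : Type} (p : Set S) : Set (Trace S) :=
  choice (test p) (seqComp (test pᶜ) (AbortC S))

/-- Possibly infinite iteration `c^ω = μ x. Nil ⊓ c;x` (least fixed point
w.r.t. refinement, i.e. greatest w.r.t. `⊆`, by Knaster–Tarski). -/
def omegaIter {S : Type} (c : Set (Trace S)) : Set (Trace S) :=
  ⋃₀ {x | x ⊆ choice (NilC S) (seqComp c x)}

/-- Guarantee command `guar(g) = (π(g) ⊓ ε⊥(⊤))^ω`. -/
def guarC {S : Type} (g : Set (S × S)) : Set (Trace S) :=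
  omegaIter (choice (Pi g) (EpsBot Set.univ))

/-- Environment guard `eguar(r) = (π(⊤) ⊓ ε⊥(r))^ω`. -/
def eguarC {S : Type} (r : Set (S × S)) : Set (Trace S) :=
  omegaIter (choice (Pi Set.univ) (EpsBot r))

/-- Rely command `rely(r) = eguar(r) ; (Nil ⊓ ε(r̄) ; Abort)`. -/
def relyC {S : Type} (r : Set (S × S)) : Set (Trace S) :=
  seqComp (eguarC r) (choice (NilC S) (seqComp (Eps rᶜ) (AbortC S)))

def abortFirst {S : Type} (c₁ c₂ : Set (Trace S)) : Set (Trace S) :=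
  abortComplete (aborting c₁ ∩ c₂)

/-- Weak conjunction `c₁ ⋒ c₂`. -/
def wconj {S : Type} (c₁ c₂ : Set (Trace S)) : Set (Trace S) :=
  (c₁ ∩ c₂) ∪ abortFirst c₁ c₂ ∪ abortFirst c₂ c₁

/-! ### Auxiliary lemmas for the complete-lattice theorem -/

section Auxiliary

variable {S : Type}

private lemma isSome_of_eq_some {t : RawSeq S} {i : ℕ} {s : Step S} (h : t i = some s) :
    (t i).isSome := by simp [h]

private lemma hl_lt {t : RawSeq S} {n : ℕ} (h : HasLength t n) {i : ℕ} {s : Step S}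
    (hi : t i = some s) : i < n := (h i).1 (by simp [hi])

private lemma hl_some {t : RawSeq S} {n : ℕ} (h : HasLength t n) {i : ℕ} (hi : i < n) :
    ∃ s, t i = some s := Option.isSome_iff_exists.mp ((h i).2 hi)

private lemma hl_unique {t : RawSeq S} {a b : ℕ} (ha : HasLength t a) (hb : HasLength t b) :
    a = b := by
  have h1 : ¬ (t a).isSome := by rw [ha a]; omega
  have h2 : ¬ (t b).isSome := by rw [hb b]; omega
  rw [hb a] at h1; rw [ha b] at h2; omega

private lemma hl_dc {t : RawSeq S} {n : ℕ} (h : HasLength t n) :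
    ∀ i, (t (i+1)).isSome → (t i).isSome :=
  fun i hi => (h i).2 (by have := (h (i+1)).1 hi; omega)

private lemma dc_le0 {t : RawSeq S} (dc : ∀ i, (t (i+1)).isSome → (t i).isSome) :
    ∀ k i, (t (i+k)).isSome → (t i).isSome := by
  intro k
  induction k with
  | zero => intro i h; exact h
  | succ m ih => intro i h; exact ih i (dc (i+m) h)

private lemma dc_le' {t : RawSeq S} (dc : ∀ i, (t (i+1)).isSome → (t i).isSome)
    {i j : ℕ} (hij : i ≤ j) (hj : (t j).isSome) : (t i).isSome := by
  obtain ⟨k, rfl⟩ := Nat.exists_eq_add_of_le hij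
  exact dc_le0 dc k i hj

private lemma sp_trans {a b c : RawSeq S} (h1 : SeqPrefix a b) (h2 : SeqPrefix b c) :
    SeqPrefix a c := fun i s hs => h2 i s (h1 i s hs)

/-- Two sequences with downward-closed domains that are both sub-sequences of a common
sequence are comparable. -/
private lemma prefix_compat {t u v : RawSeq S}
    (dct : ∀ i, (t (i+1)).isSome → (t i).isSome)
    (dcu : ∀ i, (u (i+1)).isSome → (u i).isSome)
    (ht : SeqPrefix t v) (hu : SeqPrefix u v) :
    SeqPrefix t u ∨ SeqPrefix u t := by
  by_cases h : SeqPrefix t u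
  · exact Or.inl h
  · right
    have h' : ∃ i s, t i = some s ∧ u i ≠ some s := by
      by_contra hc; push_neg at hc; exact h fun i s hs => hc i s hs
    obtain ⟨i, s, hts, hus⟩ := h'
    intro j x hj
    have hji : j < i := by
      by_contra hc
      push_neg at hc
      have hsome : (u i).isSome := dc_le' dcu hc (isSome_of_eq_some hj)
      obtain ⟨y, hy⟩ := Option.isSome_iff_exists.mp hsome
      have e1 := hu i y hy
      have e2 := ht i s hts
      rw [e2] at e1
      exact hus (by rw [hy, Option.some.inj e1])
    have hsome : (t j).isSome := dc_le' dct (by omega) (isSome_of_eq_some hts)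
    obtain ⟨z, hz⟩ := Option.isSome_iff_exists.mp hsome
    have e1 := ht j z hz
    have e2 := hu j x hj
    rw [e2] at e1
    rw [hz, Option.some.inj e1]

/-- `t ++ [π(⊥)]` where `t` has length `n`. -/
private def snoc3 (t : RawSeq S) (n : ℕ) : RawSeq S :=
  fun i => if i < n then t i else if i = n then some (Step.prog none) else none

private lemma snoc3_lt {t : RawSeq S} {n i : ℕ} (h : i < n) : snoc3 t n i = t i := by
  simp [snoc3, h]

private lemma snoc3_self {t : RawSeq S} {n : ℕ} : snoc3 t n n = some (Step.prog none) := by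
  simp [snoc3]

private lemma snoc3_gt {t : RawSeq S} {n i : ℕ} (h : n < i) : snoc3 t n i = none := by
  simp only [snoc3]
  rw [if_neg (by omega), if_neg (by omega)]

private lemma snoc3_isSome {t : RawSeq S} {n : ℕ} (h : HasLength t n) (i : ℕ) :
    (snoc3 t n i).isSome ↔ i ≤ n := by
  rcases Nat.lt_trichotomy i n with h1 | h1 | h1
  · rw [snoc3_lt h1, h i]; omega
  · subst h1; rw [snoc3_self]; simp
  · rw [snoc3_gt h1]; simp; omega

/-- Stems of potential aborting lower bounds of `A`. -/
private def Stem (A : Set (Trace S)) (t : RawSeq S) (n : ℕ) : Prop :=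
  HasLength t n ∧ (∀ i st, t i = some st → ¬ st.isTerminal) ∧
    ∀ tr ∈ A, SeqPrefix t tr.steps ∨ SeqPrefix tr.steps (snoc3 t n)

private lemma exists_glb (σ₀ : S) (A : Set (Trace S))
    (hA : ∀ tr ∈ A, tr.init = σ₀) :
    ∃ inf : Trace S, inf.init = σ₀ ∧ (∀ tr ∈ A, TrLE inf tr) ∧
      ∀ lb : Trace S, lb.init = σ₀ → (∀ tr ∈ A, TrLE lb tr) → TrLE lb inf := by
  classical
  by_cases hch : ∀ tr₁ ∈ A, ∀ tr₂ ∈ A,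
      SeqPrefix tr₁.steps tr₂.steps ∨ SeqPrefix tr₂.steps tr₁.steps
  · -- chain case: inf is the pointwise union
    let f : RawSeq S := fun i =>
      if h : ∃ tr ∈ A, (tr.steps i).isSome then h.choose.steps i else none
    have hf : ∀ i, f i = if h : ∃ tr ∈ A, (tr.steps i).isSome then h.choose.steps i else none :=
      fun _ => rfl
    have hup : ∀ tr ∈ A, SeqPrefix tr.steps f := by
      intro tr htr i s hs
      have hex : ∃ tr' ∈ A, (tr'.steps i).isSome := ⟨tr, htr, isSome_of_eq_some hs⟩
      rw [hf i, dif_pos hex]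
      obtain ⟨htr', hsome'⟩ := hex.choose_spec
      rcases hch tr htr _ htr' with h | h
      · exact h i s hs
      · obtain ⟨y, hy⟩ := Option.isSome_iff_exists.mp hsome'
        have e := h i y hy
        rw [hs] at e
        rw [hy, Option.some.inj e]
    have hdown : ∀ i s, f i = some s → ∃ tr ∈ A, tr.steps i = some s := by
      intro i s hs
      rw [hf i] at hs
      by_cases hex : ∃ tr ∈ A, (tr.steps i).isSome
      · rw [dif_pos hex] at hs; exact ⟨hex.choose, hex.choose_spec.1, hs⟩
      · rw [dif_neg hex] at hs; exact nomatch hs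
    have hclosed : ∀ i, (f (i+1)).isSome → (f i).isSome := by
      intro i h
      obtain ⟨y, hy⟩ := Option.isSome_iff_exists.mp h
      obtain ⟨tr, htr, hty⟩ := hdown _ _ hy
      have h2 : (tr.steps i).isSome := tr.closed i (isSome_of_eq_some hty)
      obtain ⟨z, hz⟩ := Option.isSome_iff_exists.mp h2
      exact isSome_of_eq_some (hup tr htr i z hz)
    have hwf : ∀ i st, f i = some st → st.isTerminal → f (i+1) = none := by
      intro i st hi hterm
      obtain ⟨tr, htr, hti⟩ := hdown _ _ hi
      cases hnext : f (i+1) with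
      | none => rfl
      | some y =>
        exfalso
        obtain ⟨tr', htr', hty⟩ := hdown _ _ hnext
        rcases hch tr htr tr' htr' with h | h
        · have e := h i st hti
          have h0 := tr'.wf i st e hterm
          rw [h0] at hty; exact nomatch hty
        · have e := h (i+1) y hty
          rw [tr.wf i st hti hterm] at e; exact nomatch e
    refine ⟨⟨σ₀, f, hclosed, hwf⟩, rfl, ?_, ?_⟩
    · intro tr htr
      exact ⟨(hA tr htr).symm, Or.inl (hup tr htr)⟩
    · intro lb hlbi hlb
      by_cases hall : ∀ tr ∈ A, SeqPrefix tr.steps lb.steps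
      · refine ⟨hlbi, Or.inl ?_⟩
        intro i s hs
        obtain ⟨tr, htr, h⟩ := hdown i s hs
        exact hall tr htr i s h
      · push_neg at hall
        obtain ⟨tr₀, htr₀, hn0⟩ := hall
        rcases (hlb tr₀ htr₀).2 with h | ⟨t₃, hsn, hpf⟩
        · exact absurd h hn0
        · exact ⟨hlbi, Or.inr ⟨t₃, hsn, sp_trans hpf (hup tr₀ htr₀)⟩⟩
  · -- non-chain case
    push_neg at hch
    obtain ⟨tr₁, h1, tr₂, h2, hn12, hn21⟩ := hch
    have hj' : ∃ j s, tr₁.steps j = some s ∧ tr₂.steps j ≠ some s := by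
      by_contra h; push_neg at h; exact hn12 fun i s hs => h i s hs
    obtain ⟨j, s, hj1, hj2⟩ := hj'
    have hstem0 : Stem A (emptySeq S) 0 :=
      ⟨fun i => by simp [emptySeq], fun i st h => by simp [emptySeq] at h,
        fun tr _ => Or.inl fun i s hs => by simp [emptySeq] at hs⟩
    have hbound : ∃ N, ∀ t n, Stem A t n → n ≤ N := by
      refine ⟨j + (if h : ∃ m, HasLength tr₁.steps m then h.choose else 0)
               + (if h : ∃ m, HasLength tr₂.steps m then h.choose else 0), ?_⟩
      rintro t n ⟨hlen, hterm, hcmp⟩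
      rcases hcmp tr₁ h1 with c1 | c1
      · rcases hcmp tr₂ h2 with c2 | c2
        · -- t is a prefix of both: n ≤ j
          have hnj : n ≤ j := by
            by_contra hc
            push_neg at hc
            obtain ⟨x, hx⟩ := hl_some hlen hc
            have e1 := c1 j x hx
            have e2 := c2 j x hx
            rw [hj1] at e1
            refine hj2 ?_
            rw [Option.some.inj e1]
            exact e2
          omega
        · -- t ≤ tr₁, tr₂ ≤ snoc3 t n
          by_cases h2n : (tr₂.steps n).isSome
          · have hlen2 : HasLength tr₂.steps (n+1) := by
              intro i
              constructor
              · intro hi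
                by_contra hc
                push_neg at hc
                obtain ⟨y, hy⟩ := Option.isSome_iff_exists.mp hi
                have e := c2 i y hy
                rw [snoc3_gt (by omega)] at e
                exact nomatch e
              · intro hi
                exact dc_le' tr₂.closed (by omega) h2n
            have hex : ∃ m, HasLength tr₂.steps m := ⟨n+1, hlen2⟩
            rw [dif_pos hex]
            have := hl_unique hex.choose_spec hlen2
            omega
          · exfalso
            apply hn21
            intro i y hy
            have hsn := c2 i y hy
            have hin : i < n := by
              by_contra hc
              push_neg at hc
              rcases Nat.lt_or_ge n i with h' | h'
              · rw [snoc3_gt h'] at hsn; exact nomatch hsn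
              · have he : i = n := by omega
                rw [he] at hy
                exact h2n (isSome_of_eq_some hy)
            rw [snoc3_lt hin] at hsn
            exact c1 i y hsn
      · rcases hcmp tr₂ h2 with c2 | c2
        · -- tr₁ ≤ snoc3 t n, t ≤ tr₂ (symmetric)
          by_cases h1n : (tr₁.steps n).isSome
          · have hlen1 : HasLength tr₁.steps (n+1) := by
              intro i
              constructor
              · intro hi
                by_contra hc
                push_neg at hc
                obtain ⟨y, hy⟩ := Option.isSome_iff_exists.mp hi
                have e := c1 i y hy
                rw [snoc3_gt (by omega)] at e
                exact nomatch e
              · intro hi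
                exact dc_le' tr₁.closed (by omega) h1n
            have hex : ∃ m, HasLength tr₁.steps m := ⟨n+1, hlen1⟩
            rw [dif_pos hex]
            have := hl_unique hex.choose_spec hlen1
            omega
          · exfalso
            apply hn12
            intro i y hy
            have hsn := c1 i y hy
            have hin : i < n := by
              by_contra hc
              push_neg at hc
              rcases Nat.lt_or_ge n i with h' | h'
              · rw [snoc3_gt h'] at hsn; exact nomatch hsn
              · have he : i = n := by omega
                rw [he] at hy
                exact h1n (isSome_of_eq_some hy)
            rw [snoc3_lt hin] at hsn
            exact c2 i y hsn
        · rcases prefix_compat tr₁.closed tr₂.closed c1 c2 with h | h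
          · exact absurd h hn12
          · exact absurd h hn21
    have hside : ∀ t n, Stem A t n → SeqPrefix t tr₁.steps ∨ SeqPrefix t tr₂.steps := by
      rintro t n ⟨hlen, hterm, hcmp⟩
      rcases hcmp tr₁ h1 with c1 | c1
      · exact Or.inl c1
      rcases hcmp tr₂ h2 with c2 | c2
      · exact Or.inr c2
      rcases prefix_compat tr₁.closed tr₂.closed c1 c2 with h | h
      · exact absurd h hn12
      · exact absurd h hn21
    have hchain2 : ∀ t n u k, Stem A t n → Stem A u k → k ≤ n → SeqPrefix u t := by
      intro t n u k hst hsu hkn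
      have hsideu := hside u k hsu
      obtain ⟨hlent, htermt, hcmpt⟩ := hst
      obtain ⟨hlenu, htermu, hcmpu⟩ := hsu
      have key : ∀ tr, tr ∈ A → SeqPrefix u tr.steps →
          (SeqPrefix t tr.steps ∨ SeqPrefix tr.steps (snoc3 t n)) → SeqPrefix u t := by
        intro tr htr hu hc
        rcases hc with hc | hc
        · rcases prefix_compat (hl_dc hlenu) (hl_dc hlent) hu hc with h | h
          · exact h
          · intro i x hx
            have hik : i < k := hl_lt hlenu hx
            obtain ⟨y, hy⟩ := hl_some hlent (show i < n by omega)
            have e := h i y hy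
            rw [hx] at e
            rw [hy, Option.some.inj e]
        · intro i x hx
          have h1' := hc i x (hu i x hx)
          rcases Nat.lt_trichotomy i n with h' | h' | h'
          · rw [snoc3_lt h'] at h1'; exact h1'
          · exfalso
            rw [h', snoc3_self] at h1'
            refine htermu i x hx ?_
            rw [← Option.some.inj h1']
            trivial
          · rw [snoc3_gt h'] at h1'; exact nomatch h1'
      rcases hsideu with hu | hu
      · exact key tr₁ h1 hu (hcmpt tr₁ h1)
      · exact key tr₂ h2 hu (hcmpt tr₂ h2)
    obtain ⟨N, hNb⟩ := hbound
    have hPmax : ∃ t, Stem A t (Nat.findGreatest (fun n => ∃ t, Stem A t n) N) :=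
      Nat.findGreatest_spec (P := fun n => ∃ t, Stem A t n) (Nat.zero_le N) ⟨emptySeq S, hstem0⟩
    obtain ⟨that, hhat⟩ := hPmax
    set nhat := Nat.findGreatest (fun n => ∃ t, Stem A t n) N with hnhat
    have hle : ∀ t n, Stem A t n → n ≤ nhat := by
      intro t n h
      exact Nat.le_findGreatest (hNb t n h) ⟨t, h⟩
    obtain ⟨hlenh, htermh, hcmph⟩ := hhat
    refine ⟨⟨σ₀, snoc3 that nhat, ?_, ?_⟩, rfl, ?_, ?_⟩
    · -- closed
      intro i hi
      have hi' : i + 1 ≤ nhat := (snoc3_isSome hlenh (i+1)).mp hi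
      rcases Nat.lt_or_ge i nhat with h' | h'
      · rw [snoc3_lt h']
        exact (hlenh i).2 h'
      · have he : i = nhat := by omega
        rw [he, snoc3_self]; rfl
    · -- wf
      intro i st hi hterm
      rcases Nat.lt_trichotomy i nhat with h' | h' | h'
      · rw [snoc3_lt h'] at hi
        exact absurd hterm (htermh i st hi)
      · exact snoc3_gt (by omega)
      · rw [snoc3_gt h'] at hi; exact nomatch hi
    · -- lower bound
      intro tr htr
      refine ⟨(hA tr htr).symm, ?_⟩
      rcases hcmph tr htr with hc | hc
      · exact Or.inr ⟨that, ⟨nhat, hlenh, fun i hi => snoc3_lt hi, snoc3_self,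
          fun i => (snoc3_isSome hlenh i).trans (by omega)⟩, hc⟩
      · exact Or.inl hc
    · -- greatest lower bound
      intro lb hlbi hlb
      have hab : ∃ t₃, SnocEq lb.steps t₃ (Step.prog none) := by
        rcases (hlb tr₁ h1).2 with c | c
        · rcases (hlb tr₂ h2).2 with c' | c'
          · rcases prefix_compat tr₁.closed tr₂.closed c c' with h | h
            · exact absurd h hn12
            · exact absurd h hn21
          · exact ⟨c'.choose, c'.choose_spec.1⟩
        · exact ⟨c.choose, c.choose_spec.1⟩
      obtain ⟨t₃, hsn⟩ := hab
      obtain ⟨n, hlen3, hagree, hat, hlenlb⟩ := hsn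
      have hstem3 : Stem A t₃ n := by
        refine ⟨hlen3, ?_, ?_⟩
        · intro i st hi hterm
          have hin : i < n := hl_lt hlen3 hi
          have hlbi' : lb.steps i = some st := by rw [hagree i hin]; exact hi
          have hnone := lb.wf i st hlbi' hterm
          have h2' := (hlenlb (i+1)).2 (by omega)
          rw [hnone] at h2'
          simp at h2'
        · intro tr htr
          rcases (hlb tr htr).2 with c | ⟨t₃', hsn', hpf'⟩
          · refine Or.inr ?_
            intro i x hx
            have hlx := c i x hx
            have hin : i < n + 1 := (hlenlb i).1 (isSome_of_eq_some hlx)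
            rcases Nat.lt_or_ge i n with h' | h'
            · rw [snoc3_lt h', ← hagree i h']
              exact hlx
            · have he : i = n := by omega
              subst he
              rw [snoc3_self]
              rw [hat] at hlx
              exact hlx
          · refine Or.inl ?_
            obtain ⟨n', hlen3', hagree', hat', hlenlb'⟩ := hsn'
            have hnn : n' = n := by
              have := hl_unique hlenlb' hlenlb
              omega
            subst hnn
            intro i x hx
            have hin : i < n' := hl_lt hlen3 hx
            have hx' : t₃' i = some x := by
              rw [← hagree' i hin, hagree i hin]
              exact hx
            exact hpf' i x hx'
      have hle3 := hle t₃ n hstem3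
      have hpfx : SeqPrefix t₃ that :=
        hchain2 that nhat t₃ n ⟨hlenh, htermh, hcmph⟩ hstem3 hle3
      refine ⟨hlbi, Or.inr ⟨t₃, ⟨n, hlen3, hagree, hat, hlenlb⟩, ?_⟩⟩
      intro i x hx
      have hx' := hpfx i x hx
      have hin : i < nhat := hl_lt hlenh hx'
      show snoc3 that nhat i = some x
      rw [snoc3_lt hin]
      exact hx'

end Auxiliary

/-- For a fixed initial state `σ₀`, the traces starting from `σ₀` form a
complete lattice under trace refinement, with least element `(σ₀,[π(⊥)])`
and greatest element `(σ₀,[])`. -/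
theorem traces_from_state_completeLattice {S : Type} (σ₀ : S) :
    (∀ A : Set (Trace S), (∀ tr ∈ A, tr.init = σ₀) →
      (∃ sup : Trace S, sup.init = σ₀ ∧ (∀ tr ∈ A, TrLE tr sup) ∧
        ∀ ub : Trace S, ub.init = σ₀ → (∀ tr ∈ A, TrLE tr ub) → TrLE sup ub) ∧
      (∃ inf : Trace S, inf.init = σ₀ ∧ (∀ tr ∈ A, TrLE inf tr) ∧
        ∀ lb : Trace S, lb.init = σ₀ → (∀ tr ∈ A, TrLE lb tr) → TrLE lb inf)) ∧
    (∀ tr : Trace S, tr.init = σ₀ → TrLE (botTrace σ₀) tr) ∧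
    (∀ tr : Trace S, tr.init = σ₀ → TrLE tr (emptyTrace σ₀)) := by
  refine ⟨?_, ?_, ?_⟩
  · intro A hAinit
    constructor
    · obtain ⟨i, hi1, hi2, hi3⟩ := exists_glb σ₀
        {ub : Trace S | ub.init = σ₀ ∧ ∀ tr ∈ A, TrLE tr ub} (fun tr h => h.1)
      refine ⟨i, hi1, ?_, ?_⟩
      · intro tr htr
        exact hi3 tr (hAinit tr htr) fun ub hub => hub.2 tr htr
      · intro ub hub1 hub2
        exact hi2 ub ⟨hub1, hub2⟩
    · exact exists_glb σ₀ A hAinit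
  · intro tr htr
    refine ⟨htr.symm, Or.inr ⟨emptySeq S, ⟨0, ?_, ?_, ?_, ?_⟩, ?_⟩⟩
    · intro i; simp [emptySeq]
    · intro i hi; omega
    · simp [botTrace, seq1]
    · intro i
      rcases Nat.eq_zero_or_pos i with h | h
      · subst h; simp [botTrace, seq1]
      · simp only [botTrace, seq1]
        rw [if_neg (by omega)]
        simp; omega
    · intro i s hs; simp [emptySeq] at hs
  · intro tr htr
    exact ⟨htr, Or.inl fun i s hs => by simp [emptyTrace, emptySeq] at hs⟩

end Aczel
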